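/- arXiv:2006.07202 — 3 statements merged into one kernel-verified Lean document; each statement's English description precedes it below -/
import Mathlib

section
/- Let a be a d×d symmetric positive semidefinite real matrix satisfying the Cordes condition |a|_F² / (Tr a)² ≤ 1/(d−1+ν) for some ν ∈ (0,1], where |·|_F is the Frobenius norm and Tr a > 0. Let γ = Tr(a)/|a|_F². Then for every symmetric d×d matrix M, |γ (a : M) − Tr M| ≤ √(1−ν) · |M|_F, where a : M denotes the Frobenius inner product. -/
/-- Pointwise Cordes inequality (no lower-order terms): if `a` is symmetric positive
semidefinite with `|a|_F²/(Tr a)² ≤ 1/(d-1+ν)`, then with `γ = Tr a / |a|_F²`,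
`|γ (a : M) − Tr M| ≤ √(1−ν) |M|_F` for all symmetric `M`. -/
theorem cordes_pointwise_inequality {d : ℕ} (hd : 1 ≤ d) (ν : ℝ)
    (hν0 : 0 < ν) (hν1 : ν ≤ 1)
    (a : Matrix (Fin d) (Fin d) ℝ) (ha : a.IsSymm) (hpsd : a.PosSemidef)
    (htr : 0 < a.trace) (hfrob : 0 < ∑ i, ∑ j, (a i j)^2)
    (hcordes : (∑ i, ∑ j, (a i j)^2) / a.trace^2 ≤ 1 / ((d : ℝ) - 1 + ν)) :
    ∀ M : Matrix (Fin d) (Fin d) ℝ, M.IsSymm →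
      |a.trace / (∑ i, ∑ j, (a i j)^2) * (∑ i, ∑ j, a i j * M i j) - M.trace|
        ≤ Real.sqrt (1 - ν) * Real.sqrt (∑ i, ∑ j, (M i j)^2) := by
  intro M hM
  set T : ℝ := a.trace with hT
  set S : ℝ := ∑ i, ∑ j, (a i j)^2 with hS
  set γ : ℝ := T / S with hγ
  have hd1 : (1:ℝ) ≤ (d:ℝ) := by exact_mod_cast hd
  have hdν : (0:ℝ) < (d:ℝ) - 1 + ν := by linarith
  have hTsq : (0:ℝ) < T^2 := by positivity
  -- Cordes rearranged: (d-1+ν) * S ≤ T^2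
  have hkey : ((d:ℝ) - 1 + ν) * S ≤ T^2 := by
    rw [div_le_div_iff₀ hTsq hdν] at hcordes
    linarith
  -- The matrix B = γ a - I
  set B : Matrix (Fin d) (Fin d) ℝ := fun i j => γ * a i j - (if i = j then 1 else 0) with hB
  have htrace_eq : T = ∑ i, a i i := by
    simp [hT, Matrix.trace, Matrix.diag]
  have hMtrace : M.trace = ∑ i, M i i := by
    simp [Matrix.trace, Matrix.diag]
  -- the LHS as an inner product with B
  have hinner : ∑ i, ∑ j, B i j * M i j
      = γ * (∑ i, ∑ j, a i j * M i j) - M.trace := by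
    simp only [hB, sub_mul, ite_mul, one_mul, zero_mul, Finset.sum_sub_distrib,
      Finset.sum_ite_eq, Finset.mem_univ, if_true, mul_assoc]
    rw [hMtrace]
    simp [Finset.mul_sum]
  -- squared Frobenius norm of B
  have hrow : ∀ i : Fin d, ∑ j, (B i j)^2
      = (∑ j, γ^2 * (a i j)^2) - 2 * γ * a i i + 1 := by
    intro i
    have h1 : ∑ j, (B i j)^2
        = ∑ j, (γ^2 * (a i j)^2 - 2 * γ * (if i = j then a i j else 0)
            + (if i = j then (1:ℝ) else 0)) := by
      refine Finset.sum_congr rfl fun j _ => ?_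
      simp only [hB]
      split <;> ring
    rw [h1]
    simp [Finset.sum_add_distrib, Finset.sum_sub_distrib, Finset.sum_ite_eq, mul_ite, mul_zero]
  have hBnorm : ∑ i, ∑ j, (B i j)^2 = γ^2 * S - 2 * γ * T + d := by
    simp only [hrow, Finset.sum_add_distrib, Finset.sum_sub_distrib]
    rw [← Finset.mul_sum, ← htrace_eq]
    simp [hS, Finset.mul_sum]
  have hSne : S ≠ 0 := ne_of_gt hfrob
  have hBval : γ^2 * S - 2 * γ * T + d = (d:ℝ) - T^2 / S := by
    rw [hγ]
    field_simp
    ring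
  have hTS : (d:ℝ) - 1 + ν ≤ T^2 / S := (le_div_iff₀ hfrob).2 hkey
  have hBle : ∑ i, ∑ j, (B i j)^2 ≤ 1 - ν := by
    rw [hBnorm, hBval]; linarith
  -- Cauchy-Schwarz
  have hcs := Finset.sum_mul_sq_le_sq_mul_sq Finset.univ
    (fun p : Fin d × Fin d => B p.1 p.2) (fun p : Fin d × Fin d => M p.1 p.2)
  rw [Fintype.sum_prod_type, Fintype.sum_prod_type, Fintype.sum_prod_type] at hcs
  have hBnn : (0:ℝ) ≤ ∑ i, ∑ j, (B i j)^2 := by positivity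
  have habs : |∑ i, ∑ j, B i j * M i j|
      ≤ Real.sqrt (∑ i, ∑ j, (B i j)^2) * Real.sqrt (∑ i, ∑ j, (M i j)^2) := by
    rw [← Real.sqrt_sq_eq_abs, ← Real.sqrt_mul hBnn]
    exact Real.sqrt_le_sqrt hcs
  calc |γ * (∑ i, ∑ j, a i j * M i j) - M.trace|
      = |∑ i, ∑ j, B i j * M i j| := by rw [hinner]
    _ ≤ Real.sqrt (∑ i, ∑ j, (B i j)^2) * Real.sqrt (∑ i, ∑ j, (M i j)^2) := habs
    _ ≤ Real.sqrt (1 - ν) * Real.sqrt (∑ i, ∑ j, (M i j)^2) :=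
        mul_le_mul_of_nonneg_right (Real.sqrt_le_sqrt hBle) (Real.sqrt_nonneg _)
end

section
/- Let a ∈ ℝ^{d×d} be symmetric, b ∈ ℝ^d, c ≥ 0 a real number, λ > 0 and ν ∈ (0,1], and suppose the Cordes condition (|a|_F² + |b|²/(2λ) + (c/λ)²) / (Tr a + c/λ)² ≤ 1/(d+ν) holds with Tr a + c/λ > 0. Set γ = (Tr a + c/λ) / (|a|_F² + |b|²/(2λ) + c²/λ²). Then for all symmetric matrices M ∈ ℝ^{d×d}, vectors p ∈ ℝ^d and reals r, |γ(a : M + b·p − c r) − (Tr M − λ r)| ≤ √(1−ν) · √(|M|_F² + 2λ|p|² + λ² r²). -/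
/-- Pointwise Cordes inequality with lower-order terms. -/
theorem cordes_pointwise_inequality_lower_order {d : ℕ} (ν lam : ℝ)
    (hν0 : 0 < ν) (hν1 : ν ≤ 1) (hlam : 0 < lam)
    (a : Matrix (Fin d) (Fin d) ℝ) (ha : a.IsSymm)
    (b : Fin d → ℝ) (c : ℝ) (hc : 0 ≤ c)
    (htr : 0 < a.trace + c / lam)
    (hcordes : ((∑ i, ∑ j, (a i j)^2) + (∑ i, (b i)^2) / (2 * lam) + (c / lam)^2)
        / (a.trace + c / lam)^2 ≤ 1 / ((d : ℝ) + ν)) :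
    ∀ M : Matrix (Fin d) (Fin d) ℝ, M.IsSymm → ∀ (p : Fin d → ℝ) (r : ℝ),
      |(a.trace + c / lam)
          / ((∑ i, ∑ j, (a i j)^2) + (∑ i, (b i)^2) / (2 * lam) + c^2 / lam^2)
          * ((∑ i, ∑ j, a i j * M i j) + (∑ i, b i * p i) - c * r)
        - (M.trace - lam * r)|
        ≤ Real.sqrt (1 - ν)
          * Real.sqrt ((∑ i, ∑ j, (M i j)^2) + 2 * lam * (∑ i, (p i)^2) + lam^2 * r^2) := by
  intro M hM p r
  have htra : a.trace = ∑ i, a i i := by simp [Matrix.trace, Matrix.diag]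
  have htrM : M.trace = ∑ i, M i i := by simp [Matrix.trace, Matrix.diag]
  set t : ℝ := a.trace + c / lam with ht
  set A : ℝ := (∑ i, ∑ j, (a i j)^2) + (∑ i, (b i)^2) / (2 * lam) + c^2 / lam^2 with hA
  have hclam : (c / lam)^2 = c^2 / lam^2 := by rw [div_pow]
  have hcordes' : A / t^2 ≤ 1 / ((d : ℝ) + ν) := by rw [hA, ← hclam]; exact hcordes
  have hb0 : (0:ℝ) ≤ (∑ i, (b i)^2) / (2 * lam) := by positivity
  have haa0 : (0:ℝ) ≤ ∑ i, ∑ j, (a i j)^2 := by positivity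
  have hcl0 : (0:ℝ) ≤ c^2 / lam^2 := by positivity
  have hA0 : 0 < A := by
    have h1 : (∑ i, a i i)^2 ≤ (d:ℝ) * ∑ i, (a i i)^2 := by
      have := sq_sum_le_card_mul_sum_sq (s := Finset.univ) (f := fun i => a i i)
      simpa using this
    have h2 : (∑ i, (a i i)^2) ≤ ∑ i, ∑ j, (a i j)^2 := by
      apply Finset.sum_le_sum
      intro i _
      exact Finset.single_le_sum (f := fun j => (a i j)^2) (fun j _ => by positivity)
        (Finset.mem_univ i)
    have hdiag0 : (0:ℝ) ≤ ∑ i, (a i i)^2 := by positivity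
    have hd0 : (0:ℝ) ≤ (d:ℝ) := Nat.cast_nonneg d
    have hA' : A = (∑ i, ∑ j, (a i j)^2) + (∑ i, (b i)^2) / (2 * lam) + (c / lam)^2 := by
      rw [hA, hclam]
    have hz0 : (0:ℝ) ≤ (c / lam)^2 := sq_nonneg _
    by_contra hcon
    push_neg at hcon
    have hcon' : (∑ i, ∑ j, (a i j)^2) + (∑ i, (b i)^2) / (2 * lam) + (c / lam)^2 ≤ 0 := by
      rw [← hA']; exact hcon
    have hZ : (c / lam)^2 ≤ 0 := by linarith
    have hcz : c / lam = 0 := by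
      have := le_antisymm hZ hz0
      exact pow_eq_zero_iff two_ne_zero |>.mp this
    have hX : (∑ i, ∑ j, (a i j)^2) ≤ 0 := by linarith
    have hds : ∑ i, (a i i)^2 = 0 := le_antisymm (by linarith) hdiag0
    have hsq : (∑ i, a i i)^2 ≤ 0 := by rw [hds] at h1; simpa using h1
    have hsum : ∑ i, a i i = 0 := pow_eq_zero_iff two_ne_zero |>.mp
      (le_antisymm hsq (sq_nonneg _))
    rw [ht, htra, hsum, hcz] at htr
    simp at htr
  set γ : ℝ := t / A with hγ
  set s2 : ℝ := Real.sqrt (2 * lam) with hs2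
  have hs2sq : s2^2 = 2 * lam := Real.sq_sqrt (by positivity)
  have hs2pos : 0 < s2 := Real.sqrt_pos.2 (by positivity)
  set f : (Fin d × Fin d) ⊕ (Fin d ⊕ Unit) → ℝ :=
    Sum.elim (fun ij => γ * a ij.1 ij.2 - if ij.1 = ij.2 then 1 else 0)
      (Sum.elim (fun i => γ * b i / s2) (fun _ => 1 - γ * c / lam)) with hf
  set g : (Fin d × Fin d) ⊕ (Fin d ⊕ Unit) → ℝ :=
    Sum.elim (fun ij => M ij.1 ij.2)
      (Sum.elim (fun i => s2 * p i) (fun _ => lam * r)) with hg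
  have hfg : ∑ x, f x * g x
      = γ * ((∑ i, ∑ j, a i j * M i j) + (∑ i, b i * p i) - c * r) - (M.trace - lam * r) := by
    rw [hf, hg]
    rw [Fintype.sum_sum_type, Fintype.sum_sum_type, Fintype.sum_prod_type]
    simp only [Sum.elim_inl, Sum.elim_inr]
    have e1 : ∀ i : Fin d, ∑ j, (γ * a i j - if i = j then 1 else 0) * M i j
        = γ * (∑ j, a i j * M i j) - M i i := by
      intro i
      have step : ∀ j : Fin d, (γ * a i j - if i = j then 1 else 0) * M i j
          = γ * (a i j * M i j) - (if i = j then M i j else 0) := by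
        intro j
        by_cases h : i = j
        · subst h; simp; ring
        · simp [h, mul_assoc]
      rw [Finset.sum_congr rfl (fun j _ => step j), Finset.sum_sub_distrib, ← Finset.mul_sum,
        Finset.sum_ite_eq]
      simp
    have e2 : ∀ i : Fin d, (γ * b i / s2) * (s2 * p i) = γ * (b i * p i) := by
      intro i; field_simp
    rw [Finset.sum_congr rfl (fun i _ => e1 i), Finset.sum_congr rfl (fun i _ => e2 i)]
    rw [Finset.sum_sub_distrib, ← Finset.mul_sum, ← Finset.mul_sum, htrM]
    simp only [Fintype.sum_unique]
    have hcl : (1 - γ * c / lam) * (lam * r) = lam * r - γ * (c * r) := by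
      field_simp
    rw [hcl]
    ring
  have hgsq : ∑ x, g x ^ 2
      = (∑ i, ∑ j, (M i j)^2) + 2 * lam * (∑ i, (p i)^2) + lam^2 * r^2 := by
    rw [hg, Fintype.sum_sum_type, Fintype.sum_sum_type, Fintype.sum_prod_type]
    simp only [Sum.elim_inl, Sum.elim_inr]
    have e2 : ∀ i : Fin d, (s2 * p i)^2 = 2 * lam * (p i)^2 := by
      intro i; rw [mul_pow, hs2sq]
    rw [Finset.sum_congr rfl (fun i _ => e2 i), ← Finset.mul_sum]
    simp
    ring
  have hfsq : ∑ x, f x ^ 2 ≤ 1 - ν := by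
    have key : ∑ x, f x ^ 2 = γ^2 * A - 2 * γ * t + ((d:ℝ) + 1) := by
      rw [hf, Fintype.sum_sum_type, Fintype.sum_sum_type, Fintype.sum_prod_type]
      simp only [Sum.elim_inl, Sum.elim_inr]
      have e1 : ∀ i : Fin d, ∑ j, (γ * a i j - if i = j then 1 else 0)^2
          = γ^2 * (∑ j, (a i j)^2) - 2 * γ * a i i + 1 := by
        intro i
        have : ∀ j : Fin d, (γ * a i j - if i = j then 1 else 0)^2
            = γ^2 * (a i j)^2 - (if i = j then 2 * γ * a i i else 0)
              + (if i = j then 1 else 0) := by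
          intro j
          by_cases h : i = j
          · subst h; simp; ring
          · simp [h, mul_pow]
        rw [Finset.sum_congr rfl (fun j _ => this j)]
        rw [Finset.sum_add_distrib, Finset.sum_sub_distrib, ← Finset.mul_sum,
          Finset.sum_ite_eq, Finset.sum_ite_eq]
        simp
      have e2 : ∀ i : Fin d, (γ * b i / s2)^2 = γ^2 * (b i)^2 / (2 * lam) := by
        intro i; rw [div_pow, mul_pow, hs2sq]
      rw [Finset.sum_congr rfl (fun i _ => e1 i), Finset.sum_congr rfl (fun i _ => e2 i)]
      rw [Finset.sum_add_distrib, Finset.sum_sub_distrib, ← Finset.mul_sum, ← Finset.mul_sum,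
        ← Finset.sum_div, ← Finset.mul_sum]
      simp only [Finset.sum_const, Finset.card_univ, Fintype.card_fin, nsmul_eq_mul,
        mul_one, Fintype.card_unit, Fintype.sum_unique]
      rw [hA, ht, htra]
      have hl : lam ≠ 0 := ne_of_gt hlam
      field_simp
      ring
    rw [key, hγ]
    have hAne : A ≠ 0 := ne_of_gt hA0
    have ht2 : 0 < t^2 := by positivity
    have hdν : 0 < (d:ℝ) + ν := by positivity
    have h1 : A * ((d:ℝ) + ν) ≤ t^2 := by
      rw [div_le_div_iff₀ ht2 hdν] at hcordes'
      linarith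
    have h2 : (d:ℝ) + ν ≤ t^2 / A := (le_div_iff₀ hA0).2 (by linarith [mul_comm A ((d:ℝ)+ν)])
    have h3 : (t/A)^2 * A - 2 * (t/A) * t = - (t^2 / A) := by
      field_simp
      ring
    rw [h3]
    linarith
  have CS := Finset.sum_mul_sq_le_sq_mul_sq Finset.univ f g
  have habs : |∑ x, f x * g x| ≤ Real.sqrt (1 - ν) * Real.sqrt (∑ x, g x ^ 2) := by
    have hg0 : (0:ℝ) ≤ ∑ x, g x ^ 2 := by positivity
    have h1ν : (0:ℝ) ≤ 1 - ν := by linarith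
    calc |∑ x, f x * g x| = Real.sqrt ((∑ x, f x * g x)^2) := (Real.sqrt_sq_eq_abs _).symm
      _ ≤ Real.sqrt ((∑ x, f x ^ 2) * ∑ x, g x ^ 2) := Real.sqrt_le_sqrt CS
      _ ≤ Real.sqrt ((1 - ν) * ∑ x, g x ^ 2) := by
          apply Real.sqrt_le_sqrt
          exact mul_le_mul_of_nonneg_right hfsq hg0
      _ = Real.sqrt (1 - ν) * Real.sqrt (∑ x, g x ^ 2) := Real.sqrt_mul h1ν _
  rw [hfg, hgsq] at habs
  exact habs
end

section
/- Let ω ∈ (0, π/2) and consider in ℝ² the piecewise affine function v with v(x,y) = y − x·tan(ω) on the triangle K₁ with vertices (0,0), (cos ω, sin ω), (0,1), and v(x,y) = y on the triangle K₂ with vertices (0,0), (0,1), (−1,0). Then v is continuous across the common edge F from (0,0) to (0,1), v vanishes on the boundary edges from (0,0) to (cos ω, sin ω) and from (0,0) to (−1,0), the gradients satisfy |∇(v|_{K_i})(0,0)| ≥ 1 for i = 1,2, and the jump of the normal derivative across F satisfies |[∇v·n]_F| = tan(ω) at every point of F. Consequently any constant C with |∇(v|_K)(0,0)|² ≤ C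 · ∫_F h_F^{-1} |[∇v·n]|² must satisfy C ≥ tan^{-2}(ω). -/
open MeasureTheory

/-- The corner counterexample: for the piecewise affine function with
`v = y − x tan ω` on `K₁` and `v = y` on `K₂`, continuity across the common
edge `F = {0}×[0,1]`, vanishing on the two boundary edges, gradient norms `≥ 1`
at the corner, jump of the normal derivative equal to `tan ω`, and the
consequence that any constant `C` in the corner-gradient bound satisfies
`C ≥ tan⁻²(ω)`. -/
theorem corner_counterexample (ω : ℝ) (hω0 : 0 < ω) (hω1 : ω < Real.pi / 2)
    (v1 v2 : ℝ → ℝ → ℝ)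
    (hv1 : ∀ x y, v1 x y = y - x * Real.tan ω)
    (hv2 : ∀ x y, v2 x y = y) :
    (∀ y : ℝ, v1 0 y = v2 0 y) ∧
    (∀ t : ℝ, v1 (t * Real.cos ω) (t * Real.sin ω) = 0) ∧
    (∀ t : ℝ, v2 (-t) 0 = 0) ∧
    (1 ≤ Real.sqrt ((-Real.tan ω)^2 + 1^2)) ∧
    (1 ≤ Real.sqrt ((0:ℝ)^2 + 1^2)) ∧
    (|(-Real.tan ω) - 0| = Real.tan ω) ∧
    (∀ C : ℝ,
      (-Real.tan ω)^2 + 1^2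
          ≤ C * ∫ y in Set.Icc (0:ℝ) 1, ((1:ℝ))⁻¹ * |(-Real.tan ω) - 0|^2 →
      ((Real.tan ω)^2)⁻¹ ≤ C) := by
  have htan : 0 < Real.tan ω := Real.tan_pos_of_pos_of_lt_pi_div_two hω0 hω1
  have hsin : Real.sin ω = Real.cos ω * Real.tan ω := by
    rw [Real.tan_eq_sin_div_cos]
    field_simp [Real.cos_pos_of_mem_Ioo ⟨by linarith [Real.pi_pos], hω1⟩ |>.ne']
  refine ⟨fun y => by simp [hv1, hv2], fun t => by rw [hv1]; rw [hsin]; ring,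
    fun t => by simp [hv2], ?_, ?_, ?_, ?_⟩
  · have : (1:ℝ) ≤ (-Real.tan ω)^2 + 1^2 := by nlinarith
    calc (1:ℝ) = Real.sqrt 1 := (Real.sqrt_one).symm
      _ ≤ _ := Real.sqrt_le_sqrt this
  · simp
  · simp [abs_of_pos htan]
  · intro C hC
    have hInt : (∫ y in Set.Icc (0:ℝ) 1, ((1:ℝ))⁻¹ * |(-Real.tan ω) - 0|^2)
        = (Real.tan ω)^2 := by
      rw [MeasureTheory.setIntegral_const]
      simp [Real.volume_Icc, abs_of_pos htan]
    rw [hInt] at hC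
    have h2 : (0:ℝ) < (Real.tan ω)^2 := by positivity
    rw [← one_div, div_le_iff₀ h2]
    nlinarith
end
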